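/- The largest subspace invariant under A_I and contained in ker Q (Q = diag(0,0,0,1/R)) is span{e1}, and the largest subspace invariant under A_II contained in ker Q is span{e1, e3}. In particular neither pair (A_I, C) nor (A_II, C) with C = (0,0,0,R^{-1/2}) is detectable. -/

import Mathlib

open Matrix

set_option maxHeartbeats 1000000

/-- the largest A_I-invariant subspace inside ker Q is span{e1}; the largest
A_II-invariant subspace inside ker Q is span{e1,e3}; hence neither (A_I, C) nor (A_II, C)
is detectable (PBH: an unobservable eigenvalue with nonnegative real part exists). -/
theorem largest_invariant_subspaces_and_nondetectability
    (L1 L2 C1 C2 R : ℝ) (hL1 : 0 < L1) (hL2 : 0 < L2) (hC1 : 0 < C1)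
    (hC2 : 0 < C2) (hR : 0 < R)
    (P : Matrix (Fin 4) (Fin 4) ℝ) (hP : P = (1/2 : ℝ) • Matrix.diagonal ![L1, L2, C1, C2])
    (AIq AIIq : Matrix (Fin 4) (Fin 4) ℝ)
    (hAIq : AIq = !![0,0,0,0; 0,0,1,1; 0,-1,0,0; 0,-1,0,-1/R])
    (hAIIq : AIIq = !![0,0,-1,0; 0,0,0,1; 1,0,0,0; 0,-1,0,-1/R])
    (AI AII : Matrix (Fin 4) (Fin 4) ℝ)
    (hAI : AI = (1/2 : ℝ) • (P⁻¹ * AIq)) (hAII : AII = (1/2 : ℝ) • (P⁻¹ * AIIq))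
    (Q : Matrix (Fin 4) (Fin 4) ℝ) (hQ : Q = Matrix.diagonal ![0, 0, 0, 1/R])
    (C : Fin 4 → ℝ) (hC : C = ![0, 0, 0, R ^ (-(1:ℝ)/2)])
    (e1 e3 : Fin 4 → ℝ) (he1 : e1 = ![1,0,0,0]) (he3 : e3 = ![0,0,1,0])
    (kerQ : Submodule ℝ (Fin 4 → ℝ)) (hkerQ : kerQ = LinearMap.ker Q.mulVecLin) :
    -- span{e1} is the largest A_I-invariant subspace of ker Q
    (Submodule.span ℝ {e1} ≤ kerQ ∧
     (∀ x ∈ Submodule.span ℝ {e1}, AI *ᵥ x ∈ Submodule.span ℝ {e1}) ∧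
     (∀ S : Submodule ℝ (Fin 4 → ℝ),
        (∀ x ∈ S, AI *ᵥ x ∈ S) → S ≤ kerQ → S ≤ Submodule.span ℝ {e1})) ∧
    -- span{e1,e3} is the largest A_II-invariant subspace of ker Q
    (Submodule.span ℝ {e1, e3} ≤ kerQ ∧
     (∀ x ∈ Submodule.span ℝ {e1, e3}, AII *ᵥ x ∈ Submodule.span ℝ {e1, e3}) ∧
     (∀ S : Submodule ℝ (Fin 4 → ℝ),
        (∀ x ∈ S, AII *ᵥ x ∈ S) → S ≤ kerQ → S ≤ Submodule.span ℝ {e1, e3})) ∧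
    -- neither pair is detectable (PBH test fails)
    (∃ z : ℂ, 0 ≤ z.re ∧ ∃ v : Fin 4 → ℂ, v ≠ 0 ∧
       (AI.map Complex.ofReal) *ᵥ v = z • v ∧ (fun i => (Complex.ofReal (C i))) ⬝ᵥ v = 0) ∧
    (∃ z : ℂ, 0 ≤ z.re ∧ ∃ v : Fin 4 → ℂ, v ≠ 0 ∧
       (AII.map Complex.ofReal) *ᵥ v = z • v ∧ (fun i => (Complex.ofReal (C i))) ⬝ᵥ v = 0) := by
  have hRne : R ≠ 0 := hR.ne'
  have hPinv : P⁻¹ = Matrix.diagonal ![2/L1, 2/L2, 2/C1, 2/C2] := by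
    apply Matrix.inv_eq_right_inv
    subst hP
    ext i j
    fin_cases i <;> fin_cases j <;>
      simp [Matrix.mul_apply, Matrix.diagonal, Fin.sum_univ_four, Matrix.vecHead,
        Matrix.vecTail] <;> field_simp
  have hAI' : AI = !![0,0,0,0; 0,0,1/L2,1/L2; 0,-1/C1,0,0; 0,-1/C2,0,-1/(R*C2)] := by
    rw [hAI, hPinv, hAIq]
    ext i j
    fin_cases i <;> fin_cases j <;>
      simp [Matrix.mul_apply, Matrix.diagonal, Fin.sum_univ_four, Matrix.vecHead,
        Matrix.vecTail] <;> ring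
  have hAII' : AII = !![0,0,-1/L1,0; 0,0,0,1/L2; 1/C1,0,0,0; 0,-1/C2,0,-1/(R*C2)] := by
    rw [hAII, hPinv, hAIIq]
    ext i j
    fin_cases i <;> fin_cases j <;>
      simp [Matrix.mul_apply, Matrix.diagonal, Fin.sum_univ_four, Matrix.vecHead,
        Matrix.vecTail] <;> ring
  -- kernel description
  have hker : ∀ x : Fin 4 → ℝ, x ∈ kerQ ↔ x 3 = 0 := by
    intro x
    rw [hkerQ, LinearMap.mem_ker, Matrix.mulVecLin_apply, hQ]
    constructor
    · intro h
      have h3 := congrFun h 3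
      simp [Matrix.mulVec, dotProduct, Fin.sum_univ_four, Matrix.diagonal,
        Matrix.vecHead, Matrix.vecTail] at h3
      rcases h3 with h3 | h3
      · exact absurd h3 (by positivity)
      · exact h3
    · intro h
      funext i
      fin_cases i <;>
        simp [Matrix.mulVec, dotProduct, Fin.sum_univ_four, Matrix.diagonal,
          Matrix.vecHead, Matrix.vecTail, h]
  -- membership in spans
  have hmem1 : ∀ x : Fin 4 → ℝ, x 1 = 0 → x 2 = 0 → x 3 = 0 →
      x ∈ Submodule.span ℝ {e1} := by
    intro x h1 h2 h3
    have hx : x = x 0 • e1 := by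
      funext i; fin_cases i <;> simp [he1, h1, h2, h3]
    rw [hx]
    exact Submodule.smul_mem _ _ (Submodule.subset_span rfl)
  have hmem13 : ∀ x : Fin 4 → ℝ, x 1 = 0 → x 3 = 0 →
      x ∈ Submodule.span ℝ {e1, e3} := by
    intro x h1 h3
    have hx : x = x 0 • e1 + x 2 • e3 := by
      funext i; fin_cases i <;> simp [he1, he3, h1, h3]
    rw [hx]
    exact Submodule.add_mem _
      (Submodule.smul_mem _ _ (Submodule.subset_span (Or.inl rfl)))
      (Submodule.smul_mem _ _ (Submodule.subset_span (Or.inr rfl)))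
  -- mulVec componentwise for AI
  have hAIx : ∀ x : Fin 4 → ℝ, AI *ᵥ x =
      ![0, x 2 / L2 + x 3 / L2, -(x 1) / C1, -(x 1) / C2 + -(x 3) / (R * C2)] := by
    intro x
    funext i
    rw [hAI']
    fin_cases i <;>
      simp [Matrix.mulVec, dotProduct, Fin.sum_univ_four, Matrix.vecHead,
        Matrix.vecTail] <;> ring
  have hAIIx : ∀ x : Fin 4 → ℝ, AII *ᵥ x =
      ![-(x 2) / L1, x 3 / L2, x 0 / C1, -(x 1) / C2 + -(x 3) / (R * C2)] := by
    intro x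
    funext i
    rw [hAII']
    fin_cases i <;>
      simp [Matrix.mulVec, dotProduct, Fin.sum_univ_four, Matrix.vecHead,
        Matrix.vecTail] <;> ring
  refine ⟨⟨?_, ?_, ?_⟩, ⟨?_, ?_, ?_⟩, ?_, ?_⟩
  · -- span{e1} ≤ kerQ
    rw [Submodule.span_le]
    rintro x rfl
    rw [SetLike.mem_coe, hker, he1]
    rfl
  · -- invariance for AI
    intro x hx
    induction hx using Submodule.span_induction with
    | mem x hx =>
      rcases hx with rfl
      apply hmem1 <;> simp [hAIx, he1]
    | zero => simp [Matrix.mulVec_zero, Submodule.zero_mem]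
    | add x y _ _ hx hy => rw [Matrix.mulVec_add]; exact Submodule.add_mem _ hx hy
    | smul c x _ hx => rw [Matrix.mulVec_smul]; exact Submodule.smul_mem _ _ hx
  · -- maximality for AI
    intro S hinv hle x hx
    have h3 : x 3 = 0 := (hker x).mp (hle hx)
    have hy : AI *ᵥ x ∈ S := hinv x hx
    have h1 : x 1 = 0 := by
      have := (hker _).mp (hle hy)
      rw [hAIx] at this
      have : -(x 1) / C2 + -(x 3) / (R * C2) = 0 := this
      rw [h3] at this
      field_simp at this
      have hmul : x 1 * R = 0 := by linarith [this]
      exact (mul_eq_zero.mp hmul).resolve_right hRne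
    have hz : AI *ᵥ (AI *ᵥ x) ∈ S := hinv _ hy
    have h2 : x 2 = 0 := by
      have := (hker _).mp (hle hz)
      rw [hAIx, hAIx] at this
      simp only [Matrix.cons_val_three, Matrix.cons_val_one, Matrix.vecHead,
        Matrix.vecTail] at this
      have h' : -(x 2 / L2 + x 3 / L2) / C2 + -(-(x 1) / C2 + -(x 3) / (R * C2)) / (R * C2) = 0 := by
        simpa using this
      rw [h1, h3] at h'
      field_simp at h'
      have hmul : x 2 * (C2 * R ^ 2) = 0 := by linarith [h']
      exact (mul_eq_zero.mp hmul).resolve_right (by positivity)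
    exact hmem1 x h1 h2 h3
  · -- span{e1,e3} ≤ kerQ
    rw [Submodule.span_le]
    rintro x (rfl | rfl) <;> rw [SetLike.mem_coe, hker]
    · rw [he1]; rfl
    · rw [he3]; rfl
  · -- invariance for AII
    intro x hx
    induction hx using Submodule.span_induction with
    | mem x hx =>
      rcases hx with rfl | rfl
      · apply hmem13 <;> simp [hAIIx, he1]
      · apply hmem13 <;> simp [hAIIx, he3]
    | zero => simp [Matrix.mulVec_zero, Submodule.zero_mem]
    | add x y _ _ hx hy => rw [Matrix.mulVec_add]; exact Submodule.add_mem _ hx hy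
    | smul c x _ hx => rw [Matrix.mulVec_smul]; exact Submodule.smul_mem _ _ hx
  · -- maximality for AII
    intro S hinv hle x hx
    have h3 : x 3 = 0 := (hker x).mp (hle hx)
    have hy : AII *ᵥ x ∈ S := hinv x hx
    have h1 : x 1 = 0 := by
      have := (hker _).mp (hle hy)
      rw [hAIIx] at this
      have h' : -(x 1) / C2 + -(x 3) / (R * C2) = 0 := this
      rw [h3] at h'
      field_simp at h'
      have hmul : x 1 * R = 0 := by linarith [h']
      exact (mul_eq_zero.mp hmul).resolve_right hRne
    exact hmem13 x h1 h3
  · -- PBH for AI: eigenvalue 0, eigenvector e1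
    refine ⟨0, le_refl _, (fun i => Complex.ofReal (e1 i)), ?_, ?_, ?_⟩
    · intro h
      have := congrFun h 0
      rw [he1] at this
      simp at this
    · funext i
      rw [hAI', he1]
      fin_cases i <;>
        simp [Matrix.mulVec, dotProduct, Fin.sum_univ_four, Matrix.vecHead,
          Matrix.vecTail]
    · rw [hC, he1]
      simp [dotProduct, Fin.sum_univ_four, Matrix.vecHead, Matrix.vecTail]
  · -- PBH for AII: eigenvalue i/√(L1 C1)
    set s : ℝ := Real.sqrt (L1 * C1) with hs
    have hs2 : (s : ℝ) * s = L1 * C1 := Real.mul_self_sqrt (by positivity)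
    have hsne : s ≠ 0 := by positivity
    set z : ℂ := Complex.I * (s : ℂ)⁻¹ with hz
    have hzre : z.re = 0 := by simp [hz]
    have hz2 : z * z = -((L1 : ℂ) * (C1 : ℂ))⁻¹ := by
      have hss : ((s : ℂ)) * (s : ℂ) = ((L1 : ℂ)) * (C1 : ℂ) := by
        rw [← Complex.ofReal_mul, hs2]; push_cast; ring
      rw [hz, ← hss]
      calc Complex.I * (s:ℂ)⁻¹ * (Complex.I * (s:ℂ)⁻¹)
          = (Complex.I * Complex.I) * ((s:ℂ)⁻¹ * (s:ℂ)⁻¹) := by ring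
        _ = -((s:ℂ) * (s:ℂ))⁻¹ := by rw [Complex.I_mul_I, mul_inv]; ring
    refine ⟨z, by rw [hzre], ![z * (C1 : ℂ), 0, 1, 0], ?_, ?_, ?_⟩
    · intro h
      have := congrFun h 2
      simp at this
    · funext i
      rw [hAII']
      have hL1ne : (L1 : ℂ) ≠ 0 := by exact_mod_cast hL1.ne'
      have hC1ne : (C1 : ℂ) ≠ 0 := by exact_mod_cast hC1.ne'
      fin_cases i <;>
        simp [Matrix.mulVec, dotProduct, Fin.sum_univ_four, Matrix.vecHead,
          Matrix.vecTail, Matrix.map_apply]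
      · -- row 0 : -1/L1 = z * (z * C1)
        field_simp
        rw [show (L1:ℂ) * z ^ 2 * (C1:ℂ) = (z * z) * ((L1:ℂ) * (C1:ℂ)) by ring, hz2]
        field_simp
      · -- row 2 : z * C1 / C1 = z
        field_simp
    · rw [hC]
      simp [dotProduct, Fin.sum_univ_four, Matrix.vecHead, Matrix.vecTail]
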